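/- Let b, N be positive integers, P_R, Ω_D, N_0 > 0, and let Ψ_1, …, Ψ_N be i.i.d. real random variables uniform on [−π/2^b, π/2^b), so that the signal received at the destination has combined channel v^T h_D = Σ_{n=1}^{N} √Ω_D · e^{iΨ_n}. Then the SNR at the destination, γ_RD := (P_R/N)·E[|v^T h_D|²] / N_0, equals P_R·Ω_D·(1 + (N−1)·Q) / N_0, where Q = ((2^b/π)·sin(π/2^b))². -/

import Mathlib

open MeasureTheory ProbabilityTheory Real

lemma unif_moment_aux {Ωs : Type*} [MeasurableSpace Ωs] (μ : Measure Ωs)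
    (b : ℕ) (X : Ωs → ℝ) (hX : Measurable X)
    (hunif : Measure.map X μ = ENNReal.ofReal ((2:ℝ)^b/(2*π)) •
      volume.restrict (Set.Ico (-(π/2^b)) (π/2^b)))
    (φ : ℝ → ℝ) (hφ : Measurable φ) :
    ∫ ω, φ (X ω) ∂μ = ((2:ℝ)^b/(2*π)) * ∫ x in (-(π/2^b))..(π/2^b), φ x := by
  have hle : -(π/2^b) ≤ π/2^b := by
    have := Real.pi_pos
    have h2 : (0:ℝ) < (2:ℝ)^b := by positivity
    have : 0 ≤ π/2^b := by positivity
    linarith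
  rw [← integral_map hX.aemeasurable hφ.aestronglyMeasurable, hunif,
    integral_smul_measure, smul_eq_mul, ENNReal.toReal_ofReal (by positivity)]
  congr 1
  rw [setIntegral_congr_set MeasureTheory.Ico_ae_eq_Ioc,
    intervalIntegral.integral_of_le hle]

lemma bounded_integrable {Ωs : Type*} [MeasurableSpace Ωs] (μ : Measure Ωs)
    [IsProbabilityMeasure μ] (f : Ωs → ℝ) (hf : Measurable f) (C : ℝ)
    (hC : ∀ ω, |f ω| ≤ C) : Integrable f μ :=
  (integrable_const C).mono' hf.aestronglyMeasurable (ae_of_all _ hC)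

theorem destination_side_SNR_los
    {Ωs : Type*} [MeasurableSpace Ωs] (μ : Measure Ωs) [IsProbabilityMeasure μ]
    (b N : ℕ) (hb : 0 < b) (hN : 0 < N)
    (P_R Ω_D N_0 : ℝ) (hPR : 0 < P_R) (hΩD : 0 < Ω_D) (hN0 : 0 < N_0)
    (Ψ : Fin N → Ωs → ℝ) (hmeas : ∀ n, Measurable (Ψ n))
    (hindep : iIndepFun Ψ μ)
    (hunif : ∀ n, Measure.map (Ψ n) μ =
      ENNReal.ofReal ((2 : ℝ) ^ b / (2 * π)) •
        volume.restrict (Set.Ico (-(π / 2 ^ b)) (π / 2 ^ b))) :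
    (P_R / N) * (∫ ω, ‖∑ n, (Real.sqrt Ω_D : ℂ) *
        Complex.exp (Complex.I * (Ψ n ω : ℂ))‖ ^ 2 ∂μ) / N_0 =
      P_R * Ω_D * (1 + ((N : ℝ) - 1) * ((2 : ℝ) ^ b / π * Real.sin (π / 2 ^ b)) ^ 2) / N_0 := by
  set t := π / 2 ^ b with ht
  set c := (2:ℝ) ^ b / π * Real.sin t with hc
  have hEcos : ∀ n, ∫ ω, Real.cos (Ψ n ω) ∂μ = c := by
    intro n
    rw [unif_moment_aux μ b (Ψ n) (hmeas n) (hunif n) _ Real.measurable_cos,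
      integral_cos, Real.sin_neg]
    have hπ := Real.pi_ne_zero
    rw [hc]
    ring
  have hEsin : ∀ n, ∫ ω, Real.sin (Ψ n ω) ∂μ = 0 := by
    intro n
    rw [unif_moment_aux μ b (Ψ n) (hmeas n) (hunif n) _ Real.measurable_sin,
      integral_sin, Real.cos_neg]
    ring
  have hIcos : ∀ n, Integrable (fun ω => Real.cos (Ψ n ω)) μ := fun n =>
    bounded_integrable μ _ (Real.measurable_cos.comp (hmeas n)) 1
      (fun ω => Real.abs_cos_le_one _)
  have hIsin : ∀ n, Integrable (fun ω => Real.sin (Ψ n ω)) μ := fun n =>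
    bounded_integrable μ _ (Real.measurable_sin.comp (hmeas n)) 1
      (fun ω => Real.abs_sin_le_one _)
  have hIcc : ∀ n m, Integrable (fun ω => Real.cos (Ψ n ω) * Real.cos (Ψ m ω)) μ := fun n m =>
    bounded_integrable μ _ ((Real.measurable_cos.comp (hmeas n)).mul
      (Real.measurable_cos.comp (hmeas m))) 1
      (fun ω => by
        rw [abs_mul]
        exact mul_le_one₀ (Real.abs_cos_le_one _) (abs_nonneg _) (Real.abs_cos_le_one _))
  have hIss : ∀ n m, Integrable (fun ω => Real.sin (Ψ n ω) * Real.sin (Ψ m ω)) μ := fun n m =>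
    bounded_integrable μ _ ((Real.measurable_sin.comp (hmeas n)).mul
      (Real.measurable_sin.comp (hmeas m))) 1
      (fun ω => by
        rw [abs_mul]
        exact mul_le_one₀ (Real.abs_sin_le_one _) (abs_nonneg _) (Real.abs_sin_le_one _))
  have hFint : ∀ n m, Integrable (fun ω => Real.cos (Ψ n ω) * Real.cos (Ψ m ω) +
      Real.sin (Ψ n ω) * Real.sin (Ψ m ω)) μ := fun n m => (hIcc n m).add (hIss n m)
  have hpt : ∀ ω, ‖∑ n, (Real.sqrt Ω_D : ℂ) *
      Complex.exp (Complex.I * (Ψ n ω : ℂ))‖ ^ 2 =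
      Ω_D * ∑ n, ∑ m, (Real.cos (Ψ n ω) * Real.cos (Ψ m ω) +
        Real.sin (Ψ n ω) * Real.sin (Ψ m ω)) := by
    intro ω
    have key : ‖∑ n, (Real.sqrt Ω_D : ℂ) *
        Complex.exp (Complex.I * (Ψ n ω : ℂ))‖ ^ 2 =
        Ω_D * ((∑ n, Real.cos (Ψ n ω)) ^ 2 + (∑ n, Real.sin (Ψ n ω)) ^ 2) := by
      rw [← Finset.mul_sum]
      have h1 : ∀ n : Fin N, Complex.exp (Complex.I * ((Ψ n ω : ℝ) : ℂ)) =
          Complex.cos (Ψ n ω) + Complex.sin (Ψ n ω) * Complex.I := by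
        intro n; rw [mul_comm, Complex.exp_mul_I]
      simp_rw [h1, ← Complex.ofReal_cos, ← Complex.ofReal_sin]
      rw [Finset.sum_add_distrib, ← Finset.sum_mul, ← Complex.ofReal_sum, ← Complex.ofReal_sum]
      rw [Complex.sq_norm, Complex.normSq_mul, Complex.normSq_ofReal,
        Complex.normSq_add_mul_I, Real.mul_self_sqrt hΩD.le]
    rw [key]
    congr 1
    simp_rw [pow_two, Finset.sum_mul_sum, ← Finset.sum_add_distrib]
  have hval : ∀ n m : Fin N, (∫ ω, (Real.cos (Ψ n ω) * Real.cos (Ψ m ω) +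
      Real.sin (Ψ n ω) * Real.sin (Ψ m ω)) ∂μ) = if n = m then (1:ℝ) else c ^ 2 := by
    intro n m
    by_cases h : n = m
    · subst h
      rw [if_pos rfl]
      have h1 : (fun ω => Real.cos (Ψ n ω) * Real.cos (Ψ n ω) +
          Real.sin (Ψ n ω) * Real.sin (Ψ n ω)) = fun _ => (1:ℝ) := by
        funext ω
        rw [← Real.cos_sub, sub_self, Real.cos_zero]
      rw [h1, integral_const]
      simp
    · rw [if_neg h]
      have hcc : IndepFun (fun ω => Real.cos (Ψ n ω)) (fun ω => Real.cos (Ψ m ω)) μ :=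
        (hindep.indepFun h).comp Real.measurable_cos Real.measurable_cos
      have hss : IndepFun (fun ω => Real.sin (Ψ n ω)) (fun ω => Real.sin (Ψ m ω)) μ :=
        (hindep.indepFun h).comp Real.measurable_sin Real.measurable_sin
      have h2 : (∫ ω, Real.cos (Ψ n ω) * Real.cos (Ψ m ω) ∂μ) =
          (∫ ω, Real.cos (Ψ n ω) ∂μ) * ∫ ω, Real.cos (Ψ m ω) ∂μ :=
        hcc.integral_mul_eq_mul_integral (hIcos n).aestronglyMeasurable (hIcos m).aestronglyMeasurable
      have h3 : (∫ ω, Real.sin (Ψ n ω) * Real.sin (Ψ m ω) ∂μ) =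
          (∫ ω, Real.sin (Ψ n ω) ∂μ) * ∫ ω, Real.sin (Ψ m ω) ∂μ :=
        hss.integral_mul_eq_mul_integral (hIsin n).aestronglyMeasurable (hIsin m).aestronglyMeasurable
      rw [integral_add (hIcc n m) (hIss n m), h2, h3, hEcos, hEcos, hEsin]
      ring
  have hNnz : (N : ℝ) ≠ 0 := Nat.cast_ne_zero.mpr hN.ne'
  calc (P_R / N) * (∫ ω, ‖∑ n, (Real.sqrt Ω_D : ℂ) *
        Complex.exp (Complex.I * (Ψ n ω : ℂ))‖ ^ 2 ∂μ) / N_0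
      = (P_R / N) * (Ω_D * ((N : ℝ) * (1 + ((N : ℝ) - 1) * c ^ 2))) / N_0 := by
        congr 2
        simp_rw [hpt]
        rw [integral_const_mul,
          integral_finset_sum _ (fun n _ => integrable_finset_sum _ (fun m _ => hFint n m))]
        congr 1
        rw [Finset.sum_congr rfl (fun n _ => integral_finset_sum _ (fun m _ => hFint n m))]
        have hinner : ∀ n : Fin N, ∑ m : Fin N,
            (∫ ω, (Real.cos (Ψ n ω) * Real.cos (Ψ m ω) +
              Real.sin (Ψ n ω) * Real.sin (Ψ m ω)) ∂μ) = 1 + ((N : ℝ) - 1) * c ^ 2 := by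
          intro n
          rw [Finset.sum_congr rfl (fun m _ => hval n m)]
          have h4 : ∀ m : Fin N, (if n = m then (1:ℝ) else c ^ 2) =
              c ^ 2 + (if n = m then 1 - c ^ 2 else 0) := by
            intro m; split <;> ring
          simp_rw [h4]
          rw [Finset.sum_add_distrib, Finset.sum_const, Finset.sum_ite_eq,
            if_pos (Finset.mem_univ n), Finset.card_univ, Fintype.card_fin, nsmul_eq_mul]
          ring
        rw [Finset.sum_congr rfl (fun n _ => hinner n), Finset.sum_const,
          Finset.card_univ, Fintype.card_fin, nsmul_eq_mul]
    _ = P_R * Ω_D * (1 + ((N : ℝ) - 1) * c ^ 2) / N_0 := by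
        field_simp
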